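/- arXiv:1711.00994 — 2 statements merged into one kernel-verified Lean document; each statement's English description precedes it below -/
import Mathlib

section
/- Let p > 1, θ > 0, κ ∈ ℝ, C₀ > 0, R₁ > 1, and let η, ψ_R, ψ*_R, P(R) be as in the context, with p' = p/(p-1). There exist constants C > 0 and δ₀ ∈ (0,1), depending only on p, θ, κ, C₀, R₁ and η, with the following property: if δ ∈ (0,δ₀], T > R₁, and w : Ω × [0,T) → [0,∞) is measurable, integrable on P(R) for every R ∈ (0,T), and satisfies δ + ∬_{P(R)} w(x,t) ψ_R(x,t) dx dt ≤ C₀ R^{−θ/p'} (log R)^{κ/p'} ( ∬_{P(R)} w(x,t) ψ*_R(x,t) dx dt )^{1/p} for every R ∈ [R₁,T), then T ≤ C δ^{−1/θ} (log(δ^{-1}))^{κ/θ}. -/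
open MeasureTheory Real Set

noncomputable section

/-- The plane `ℝ²` with the Euclidean norm. -/
abbrev E2 := EuclideanSpace ℝ (Fin 2)

/-- The exterior domain `Ω = {x ∈ ℝ² : |x| > 1}`. -/
def Omega : Set E2 := {x : E2 | 1 < ‖x‖}

/-- `η` is of class `C²` on `[0,∞)`, equals `1` on `[0,1/2]`, is nonincreasing on `[1/2,1]`
and vanishes on `[1,∞)`. -/
def etaOK (η : ℝ → ℝ) : Prop :=
  ContDiffOn ℝ 2 η (Set.Ici 0) ∧
  (∀ s ∈ Set.Icc (0 : ℝ) (1 / 2), η s = 1) ∧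
  AntitoneOn η (Set.Icc (1 / 2 : ℝ) 1) ∧
  (∀ s : ℝ, 1 ≤ s → η s = 0)

/-- `η*(s) = 0` for `s < 1/2` and `η*(s) = η(s)` for `s ≥ 1/2`. -/
def etaStar (η : ℝ → ℝ) (s : ℝ) : ℝ := if s < 1 / 2 then 0 else η s

/-- `ψ_R(x,t) = [η(((|x|-1)² + t)/R)]^{2p'}` with `p' = p/(p-1)`. -/
def psi (η : ℝ → ℝ) (p R : ℝ) (x : E2) (t : ℝ) : ℝ :=
  η (((‖x‖ - 1) ^ 2 + t) / R) ^ (2 * (p / (p - 1)))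

/-- `ψ*_R(x,t) = [η*(((|x|-1)² + t)/R)]^{2p'}` with `p' = p/(p-1)`. -/
def psiStar (η : ℝ → ℝ) (p R : ℝ) (x : E2) (t : ℝ) : ℝ :=
  etaStar η (((‖x‖ - 1) ^ 2 + t) / R) ^ (2 * (p / (p - 1)))

/-- `P(R) = {(x,t) ∈ Ω × [0,∞) : (|x|-1)² + t ≤ R}`. -/
def Pset (R : ℝ) : Set (E2 × ℝ) :=
  {q : E2 × ℝ | q.1 ∈ Omega ∧ 0 ≤ q.2 ∧ (‖q.1‖ - 1) ^ 2 + q.2 ≤ R}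

/-- The Laplacian in the `x`-variables: the sum of the two second partial derivatives. -/
def lapx {F : Type*} [NormedAddCommGroup F] [NormedSpace ℝ F] (f : E2 → F) (x : E2) : F :=
  ∑ i : Fin 2, iteratedDeriv 2 (fun s : ℝ => f (x + s • EuclideanSpace.single i (1 : ℝ))) 0



lemma aux_isolate (θ δ T K Z : ℝ) (hθ : 0 < θ) (hδ : 0 < δ) (hT : 0 < T)
    (h : δ ≤ K * T ^ (-θ) * Z) : T ^ θ ≤ K * δ⁻¹ * Z := by
  have hTθ : (0:ℝ) < T ^ θ := Real.rpow_pos_of_pos hT θ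
  have key : T ^ (-θ) * T ^ θ = 1 := by
    rw [← Real.rpow_add hT]; simp
  have h1 : δ * T ^ θ ≤ K * Z := by
    have h2 := mul_le_mul_of_nonneg_right h hTθ.le
    calc δ * T ^ θ ≤ K * T ^ (-θ) * Z * T ^ θ := h2
      _ = K * Z * (T ^ (-θ) * T ^ θ) := by ring
      _ = K * Z := by rw [key, mul_one]
  have h3 : T ^ θ ≤ K * Z / δ := by
    rw [le_div_iff₀ hδ]
    calc T ^ θ * δ = δ * T ^ θ := by ring
      _ ≤ K * Z := h1
  calc T ^ θ ≤ K * Z / δ := h3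
    _ = K * δ⁻¹ * Z := by field_simp

lemma aux_pow_recover (θ K x L T κ : ℝ) (hθ : 0 < θ) (hK : 0 ≤ K) (hx : 0 ≤ x) (hL : 0 ≤ L)
    (hT : 0 ≤ T) (h : T ^ θ ≤ K * x * L ^ κ) :
    T ≤ K ^ (1/θ) * x ^ (1/θ) * L ^ (κ/θ) := by
  have h1 : (T ^ θ) ^ (1/θ) ≤ (K * x * L ^ κ) ^ (1/θ) :=
    Real.rpow_le_rpow (Real.rpow_nonneg hT θ) h (by positivity)
  have h2 : (T ^ θ) ^ (1/θ) = T := by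
    rw [← Real.rpow_mul hT, mul_one_div, div_self hθ.ne', Real.rpow_one]
  have h3 : (K * x * L ^ κ) ^ (1/θ) = K ^ (1/θ) * x ^ (1/θ) * L ^ (κ/θ) := by
    rw [Real.mul_rpow (by positivity) (Real.rpow_nonneg hL κ), Real.mul_rpow hK hx,
      ← Real.rpow_mul hL, mul_one_div]
  rw [← h2, ← h3]; exact h1

set_option maxHeartbeats 1600000 in
lemma inv_aux (θ κ C₂ T₀ : ℝ) (hθ : 0 < θ) (hC₂ : 0 < C₂) (hT₀ : 1 < T₀) :
    ∃ C > (0:ℝ), ∃ δ₀ ∈ Set.Ioo (0:ℝ) 1, ∀ δ : ℝ, 0 < δ → δ ≤ δ₀ → ∀ T : ℝ, 1 < T →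
      (T ≤ T₀ ∨ δ ≤ C₂ * T ^ (-θ) * Real.log T ^ κ) →
      T ≤ C * δ ^ (-(1/θ)) * Real.log δ⁻¹ ^ (κ/θ) := by
  have hT₀0 : (0:ℝ) < T₀ := lt_trans one_pos hT₀
  set ν := |κ| with hνdef
  have hν0 : (0:ℝ) ≤ ν := abs_nonneg κ
  set ε₁ := θ/(2*(ν+1)) with hε₁def
  have hε₁ : 0 < ε₁ := by positivity
  set B := (C₂ * ε₁⁻¹ ^ κ) ^ (2/θ) with hBdef
  have hB0 : 0 < B := by positivity
  set M := |Real.log B| + 2/θ + 1 with hMdef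
  have hM : 0 < M := by positivity
  set ε₂ := (2*ν + 2)⁻¹ with hε₂def
  have hε₂ : 0 < ε₂ := by positivity
  set c₀ := ε₂ ^ (ν/θ) with hc₀def
  have hc₀ : 0 < c₀ := Real.rpow_pos_of_pos hε₂ _
  set C := max (max 1 ((C₂ * M ^ κ) ^ (1/θ))) (max (c₀⁻¹) ((C₂ * (2*θ)⁻¹ ^ κ) ^ (1/θ)))
    with hCdef
  have hC1 : (1:ℝ) ≤ C := le_trans (le_max_left _ _) (le_max_left _ _)
  have hCA : (C₂ * M ^ κ) ^ (1/θ) ≤ C := le_trans (le_max_right _ _) (le_max_left _ _)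
  have hCc : c₀⁻¹ ≤ C := le_trans (le_max_left _ _) (le_max_right _ _)
  have hCB : (C₂ * (2*θ)⁻¹ ^ κ) ^ (1/θ) ≤ C := le_trans (le_max_right _ _) (le_max_right _ _)
  have hC0 : (0:ℝ) < C := lt_of_lt_of_le one_pos hC1
  refine ⟨C, hC0, min (Real.exp (-1)) ((2 * T₀ ^ (2*θ))⁻¹), ⟨by positivity, ?_⟩, ?_⟩
  · refine lt_of_le_of_lt (min_le_left _ _) ?_
    calc Real.exp (-1) < Real.exp 0 := Real.exp_lt_exp.2 (by norm_num)
      _ = 1 := Real.exp_zero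
  intro δ hδ hδδ₀ T hT hyp
  have hδ₀lt1 : min (Real.exp (-1)) ((2 * T₀ ^ (2*θ))⁻¹) < 1 := by
    refine lt_of_le_of_lt (min_le_left _ _) ?_
    calc Real.exp (-1) < Real.exp 0 := Real.exp_lt_exp.2 (by norm_num)
      _ = 1 := Real.exp_zero
  have hx0 : (0:ℝ) < δ⁻¹ := by positivity
  have hδ1 : δ < 1 := lt_of_le_of_lt hδδ₀ hδ₀lt1
  have hx1 : (1:ℝ) < δ⁻¹ := (one_lt_inv₀ hδ).2 hδ1
  have hL1 : (1:ℝ) ≤ Real.log δ⁻¹ := by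
    have h2 : δ ≤ Real.exp (-1) := le_trans hδδ₀ (min_le_left _ _)
    have h3 := inv_anti₀ hδ h2
    rw [Real.exp_neg, inv_inv] at h3
    calc (1:ℝ) = Real.log (Real.exp 1) := (Real.log_exp 1).symm
      _ ≤ Real.log δ⁻¹ := Real.log_le_log (Real.exp_pos 1) h3
  have hL0 : (0:ℝ) < Real.log δ⁻¹ := lt_of_lt_of_le one_pos hL1
  have hδ_rw : δ ^ (-(1/θ)) = δ⁻¹ ^ (1/θ) := by
    rw [Real.inv_rpow hδ.le, ← Real.rpow_neg hδ.le]
  set y := δ⁻¹ ^ (1/(2*θ)) with hydef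
  have hy0 : 0 < y := Real.rpow_pos_of_pos hx0 _
  have hyT₀ : T₀ < y := by
    have h3 : δ ≤ (2 * T₀ ^ (2*θ))⁻¹ := le_trans hδδ₀ (min_le_right _ _)
    have h4 := inv_anti₀ hδ h3
    rw [inv_inv] at h4
    have h5 : T₀ ^ (2*θ) < δ⁻¹ := by
      have hpos := Real.rpow_pos_of_pos hT₀0 (2*θ)
      linarith
    calc T₀ = (T₀ ^ (2*θ)) ^ (1/(2*θ)) := by
          rw [← Real.rpow_mul hT₀0.le, mul_one_div, div_self (by positivity), Real.rpow_one]
      _ < y := Real.rpow_lt_rpow (by positivity) h5 (by positivity)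
  have hyx : y ≤ δ⁻¹ ^ (1/θ) := by
    apply Real.rpow_le_rpow_of_exponent_le hx1.le
    rw [one_div, one_div]
    exact inv_anti₀ hθ (by linarith)
  have hexp : 1/(2*θ) + 1/(2*θ) = 1/θ := by
    rw [← add_div, show (1:ℝ)+1 = 2 from by norm_num, mul_comm, ← div_div,
      div_div_cancel_left' (two_ne_zero (α := ℝ)), one_div]
  have hyy : y * y = δ⁻¹ ^ (1/θ) := by
    rw [hydef, ← Real.rpow_add hx0, hexp]
  rcases le_or_gt T y with hTy | hTy
  · -- small T case
    rcases le_or_gt 0 κ with hκ | hκ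
    · have h1 : (1:ℝ) ≤ Real.log δ⁻¹ ^ (κ/θ) := Real.one_le_rpow hL1 (by positivity)
      calc T ≤ y := hTy
        _ ≤ δ⁻¹ ^ (1/θ) := hyx
        _ = 1 * δ⁻¹ ^ (1/θ) * 1 := by ring
        _ ≤ C * δ⁻¹ ^ (1/θ) * Real.log δ⁻¹ ^ (κ/θ) := by
            apply mul_le_mul
            · exact mul_le_mul_of_nonneg_right hC1 (Real.rpow_nonneg hx0.le _)
            · exact h1
            · norm_num
            · exact mul_nonneg hC0.le (Real.rpow_nonneg hx0.le _)
        _ = C * δ ^ (-(1/θ)) * Real.log δ⁻¹ ^ (κ/θ) := by rw [hδ_rw]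
    · have hνκ : ν = -κ := abs_of_neg hκ
      have hLν : Real.log δ⁻¹ ^ (ν/θ) ≤ c₀⁻¹ * y := by
        have h1 : Real.log δ⁻¹ ≤ δ⁻¹ ^ ε₂ / ε₂ := Real.log_le_rpow_div hx0.le hε₂
        have h2 : Real.log δ⁻¹ ^ (ν/θ) ≤ (δ⁻¹ ^ ε₂ / ε₂) ^ (ν/θ) :=
          Real.rpow_le_rpow hL0.le h1 (by positivity)
        have h3 : (δ⁻¹ ^ ε₂ / ε₂) ^ (ν/θ) = δ⁻¹ ^ (ε₂ * (ν/θ)) / c₀ := by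
          rw [Real.div_rpow (Real.rpow_nonneg hx0.le _) hε₂.le, ← Real.rpow_mul hx0.le, hc₀def]
        have h4 : δ⁻¹ ^ (ε₂ * (ν/θ)) ≤ y := by
          rw [hydef]
          apply Real.rpow_le_rpow_of_exponent_le hx1.le
          rw [hε₂def]
          have hh : ν/(2*ν+2) ≤ 1/2 := by
            rw [div_le_div_iff₀ (by positivity) two_pos]; linarith
          calc (2*ν+2)⁻¹ * (ν/θ) = (ν/(2*ν+2))/θ := by ring
            _ ≤ (1/2)/θ := by gcongr
            _ = 1/(2*θ) := by rw [div_div]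
        calc Real.log δ⁻¹ ^ (ν/θ) ≤ δ⁻¹ ^ (ε₂ * (ν/θ)) / c₀ := h3 ▸ h2
          _ ≤ y / c₀ := by gcongr
          _ = c₀⁻¹ * y := by rw [div_eq_mul_inv]; ring
      have hLκ : Real.log δ⁻¹ ^ (κ/θ) = (Real.log δ⁻¹ ^ (ν/θ))⁻¹ := by
        rw [show κ/θ = -(ν/θ) by rw [hνκ]; ring, Real.rpow_neg hL0.le]
      have hLν0 : 0 < Real.log δ⁻¹ ^ (ν/θ) := Real.rpow_pos_of_pos hL0 _
      have key : y * Real.log δ⁻¹ ^ (ν/θ) ≤ c₀⁻¹ * δ⁻¹ ^ (1/θ) := by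
        calc y * Real.log δ⁻¹ ^ (ν/θ) ≤ y * (c₀⁻¹ * y) :=
              mul_le_mul_of_nonneg_left hLν hy0.le
          _ = c₀⁻¹ * (y * y) := by ring
          _ = c₀⁻¹ * δ⁻¹ ^ (1/θ) := by rw [hyy]
      have hgoal : y ≤ c₀⁻¹ * δ⁻¹ ^ (1/θ) * Real.log δ⁻¹ ^ (κ/θ) := by
        rw [hLκ]
        calc y = y * Real.log δ⁻¹ ^ (ν/θ) * (Real.log δ⁻¹ ^ (ν/θ))⁻¹ := by
              rw [mul_assoc, mul_inv_cancel₀ hLν0.ne', mul_one]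
          _ ≤ c₀⁻¹ * δ⁻¹ ^ (1/θ) * (Real.log δ⁻¹ ^ (ν/θ))⁻¹ :=
              mul_le_mul_of_nonneg_right key (by positivity)
      calc T ≤ y := hTy
        _ ≤ c₀⁻¹ * δ⁻¹ ^ (1/θ) * Real.log δ⁻¹ ^ (κ/θ) := hgoal
        _ ≤ C * δ⁻¹ ^ (1/θ) * Real.log δ⁻¹ ^ (κ/θ) := by
            apply mul_le_mul_of_nonneg_right
              (mul_le_mul_of_nonneg_right hCc (Real.rpow_nonneg hx0.le _))
              (Real.rpow_nonneg hL0.le _)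
        _ = C * δ ^ (-(1/θ)) * Real.log δ⁻¹ ^ (κ/θ) := by rw [hδ_rw]
  · -- large T case
    have hTT₀ : T₀ < T := lt_trans hyT₀ hTy
    have hest : δ ≤ C₂ * T ^ (-θ) * Real.log T ^ κ := hyp.resolve_left (not_le.mpr hTT₀)
    have hT0 : (0:ℝ) < T := lt_trans one_pos hT
    have hlogT : 0 < Real.log T := Real.log_pos hT
    rcases le_or_gt 0 κ with hκ | hκ
    · have hνκ : ν = κ := abs_of_nonneg hκ
      have h1 : Real.log T ^ κ ≤ T ^ (θ/2) * ε₁⁻¹ ^ κ := by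
        have h2 : Real.log T ≤ T ^ ε₁ / ε₁ := Real.log_le_rpow_div hT0.le hε₁
        have h3 : Real.log T ^ κ ≤ (T ^ ε₁ / ε₁) ^ κ := Real.rpow_le_rpow hlogT.le h2 hκ
        have h4 : (T ^ ε₁ / ε₁) ^ κ = T ^ (ε₁ * κ) * ε₁⁻¹ ^ κ := by
          rw [Real.div_rpow (Real.rpow_nonneg hT0.le _) hε₁.le, ← Real.rpow_mul hT0.le,
            Real.inv_rpow hε₁.le, div_eq_mul_inv]
        have h5 : T ^ (ε₁ * κ) ≤ T ^ (θ/2) := by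
          apply Real.rpow_le_rpow_of_exponent_le hT.le
          rw [hε₁def]
          rw [div_mul_eq_mul_div, div_le_div_iff₀ (by positivity) two_pos, hνκ]
          linarith [hθ.le]
        calc Real.log T ^ κ ≤ (T ^ ε₁ / ε₁) ^ κ := h3
          _ = T ^ (ε₁ * κ) * ε₁⁻¹ ^ κ := h4
          _ ≤ T ^ (θ/2) * ε₁⁻¹ ^ κ :=
              mul_le_mul_of_nonneg_right h5 (Real.rpow_nonneg (by positivity) κ)
      have hcrude : δ ≤ C₂ * ε₁⁻¹ ^ κ * T ^ (-(θ/2)) * 1 := by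
        calc δ ≤ C₂ * T ^ (-θ) * Real.log T ^ κ := hest
          _ ≤ C₂ * T ^ (-θ) * (T ^ (θ/2) * ε₁⁻¹ ^ κ) :=
              mul_le_mul_of_nonneg_left h1 (by positivity)
          _ = C₂ * ε₁⁻¹ ^ κ * (T ^ (-θ) * T ^ (θ/2)) := by ring
          _ = C₂ * ε₁⁻¹ ^ κ * T ^ (-(θ/2)) * 1 := by
              rw [← Real.rpow_add hT0]; rw [mul_one]; congr 2; ring
      have hcrude2 : T ^ (θ/2) ≤ C₂ * ε₁⁻¹ ^ κ * δ⁻¹ * 1 :=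
        aux_isolate (θ/2) δ T _ 1 (by positivity) hδ hT0 hcrude
      have hTB : T ≤ B * δ⁻¹ ^ (2/θ) := by
        have h7 : T ^ (θ/2) ≤ C₂ * ε₁⁻¹ ^ κ * δ⁻¹ := by rw [mul_one] at hcrude2; exact hcrude2
        have h8 : (T ^ (θ/2)) ^ (2/θ) ≤ (C₂ * ε₁⁻¹ ^ κ * δ⁻¹) ^ (2/θ) :=
          Real.rpow_le_rpow (Real.rpow_nonneg hT0.le _) h7 (by positivity)
        have h9 : (T ^ (θ/2)) ^ (2/θ) = T := by
          rw [← Real.rpow_mul hT0.le, show θ/2 * (2/θ) = 1 by field_simp, Real.rpow_one]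
        have h10 : (C₂ * ε₁⁻¹ ^ κ * δ⁻¹) ^ (2/θ) = B * δ⁻¹ ^ (2/θ) := by
          rw [Real.mul_rpow (by positivity) hx0.le, hBdef]
        rw [← h9, ← h10]; exact h8
      have hlogTM : Real.log T ≤ M * Real.log δ⁻¹ := by
        have h11 : Real.log T ≤ Real.log (B * δ⁻¹ ^ (2/θ)) := Real.log_le_log hT0 hTB
        have h12 : Real.log (B * δ⁻¹ ^ (2/θ)) = Real.log B + (2/θ) * Real.log δ⁻¹ := by
          rw [Real.log_mul hB0.ne' (Real.rpow_pos_of_pos hx0 _).ne', Real.log_rpow hx0]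
        have h13 : Real.log B ≤ |Real.log B| * Real.log δ⁻¹ :=
          le_trans (le_abs_self _) (le_mul_of_one_le_right (abs_nonneg _) hL1)
        have hLpos : (0:ℝ) ≤ Real.log δ⁻¹ := hL0.le
        rw [hMdef]
        linarith [h11, h12, h13, hL1]
      have h14 : Real.log T ^ κ ≤ M ^ κ * Real.log δ⁻¹ ^ κ := by
        calc Real.log T ^ κ ≤ (M * Real.log δ⁻¹) ^ κ :=
            Real.rpow_le_rpow hlogT.le hlogTM hκ
          _ = M ^ κ * Real.log δ⁻¹ ^ κ := Real.mul_rpow hM.le hL0.le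
      have h15 : δ ≤ C₂ * M ^ κ * T ^ (-θ) * Real.log δ⁻¹ ^ κ := by
        calc δ ≤ C₂ * T ^ (-θ) * Real.log T ^ κ := hest
          _ ≤ C₂ * T ^ (-θ) * (M ^ κ * Real.log δ⁻¹ ^ κ) :=
              mul_le_mul_of_nonneg_left h14 (by positivity)
          _ = C₂ * M ^ κ * T ^ (-θ) * Real.log δ⁻¹ ^ κ := by ring
      have h16 : T ^ θ ≤ C₂ * M ^ κ * δ⁻¹ * Real.log δ⁻¹ ^ κ :=
        aux_isolate θ δ T _ _ hθ hδ hT0 h15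
      have h17 : T ≤ (C₂ * M ^ κ) ^ (1/θ) * δ⁻¹ ^ (1/θ) * Real.log δ⁻¹ ^ (κ/θ) :=
        aux_pow_recover θ _ δ⁻¹ (Real.log δ⁻¹) T κ hθ (by positivity) hx0.le hL0.le hT0.le h16
      calc T ≤ (C₂ * M ^ κ) ^ (1/θ) * δ⁻¹ ^ (1/θ) * Real.log δ⁻¹ ^ (κ/θ) := h17
        _ ≤ C * δ⁻¹ ^ (1/θ) * Real.log δ⁻¹ ^ (κ/θ) :=
            mul_le_mul_of_nonneg_right
              (mul_le_mul_of_nonneg_right hCA (Real.rpow_nonneg hx0.le _))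
              (Real.rpow_nonneg hL0.le _)
        _ = C * δ ^ (-(1/θ)) * Real.log δ⁻¹ ^ (κ/θ) := by rw [hδ_rw]
    · have hlogy : Real.log y = 1/(2*θ) * Real.log δ⁻¹ := Real.log_rpow hx0 _
      have h1 : 1/(2*θ) * Real.log δ⁻¹ ≤ Real.log T := by
        rw [← hlogy]; exact Real.log_le_log hy0 hTy.le
      have h2 : Real.log T ^ κ ≤ (1/(2*θ) * Real.log δ⁻¹) ^ κ :=
        Real.rpow_le_rpow_of_nonpos (by positivity) h1 hκ.le
      have h3 : (1/(2*θ) * Real.log δ⁻¹) ^ κ = (2*θ)⁻¹ ^ κ * Real.log δ⁻¹ ^ κ := by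
        rw [one_div, Real.mul_rpow (by positivity) hL0.le]
      have h15 : δ ≤ C₂ * (2*θ)⁻¹ ^ κ * T ^ (-θ) * Real.log δ⁻¹ ^ κ := by
        calc δ ≤ C₂ * T ^ (-θ) * Real.log T ^ κ := hest
          _ ≤ C₂ * T ^ (-θ) * ((2*θ)⁻¹ ^ κ * Real.log δ⁻¹ ^ κ) := by
              apply mul_le_mul_of_nonneg_left _ (by positivity)
              rw [← h3]; exact h2
          _ = C₂ * (2*θ)⁻¹ ^ κ * T ^ (-θ) * Real.log δ⁻¹ ^ κ := by ring
      have h16 : T ^ θ ≤ C₂ * (2*θ)⁻¹ ^ κ * δ⁻¹ * Real.log δ⁻¹ ^ κ :=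
        aux_isolate θ δ T _ _ hθ hδ hT0 h15
      have h17 : T ≤ (C₂ * (2*θ)⁻¹ ^ κ) ^ (1/θ) * δ⁻¹ ^ (1/θ) * Real.log δ⁻¹ ^ (κ/θ) :=
        aux_pow_recover θ _ δ⁻¹ (Real.log δ⁻¹) T κ hθ (by positivity) hx0.le hL0.le hT0.le h16
      calc T ≤ (C₂ * (2*θ)⁻¹ ^ κ) ^ (1/θ) * δ⁻¹ ^ (1/θ) * Real.log δ⁻¹ ^ (κ/θ) := h17
        _ ≤ C * δ⁻¹ ^ (1/θ) * Real.log δ⁻¹ ^ (κ/θ) :=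
            mul_le_mul_of_nonneg_right
              (mul_le_mul_of_nonneg_right hCB (Real.rpow_nonneg hx0.le _))
              (Real.rpow_nonneg hL0.le _)
        _ = C * δ ^ (-(1/θ)) * Real.log δ⁻¹ ^ (κ/θ) := by rw [hδ_rw]


lemma eta_nonneg {η : ℝ → ℝ} (hη : etaOK η) {s : ℝ} (hs : 0 ≤ s) : 0 ≤ η s := by
  obtain ⟨-, h1, hanti, h0⟩ := hη
  rcases le_or_gt s (1/2) with h | h
  · rw [h1 s ⟨hs, h⟩]; norm_num
  rcases le_or_gt s 1 with h2 | h2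
  · have := hanti (Set.mem_Icc.2 ⟨h.le, h2⟩) (Set.mem_Icc.2 ⟨by norm_num, le_rfl⟩) h2
    rw [h0 1 le_rfl] at this
    exact this
  · rw [h0 s h2.le]

lemma eta_le_one {η : ℝ → ℝ} (hη : etaOK η) {s : ℝ} (hs : 0 ≤ s) : η s ≤ 1 := by
  obtain ⟨-, h1, hanti, h0⟩ := hη
  rcases le_or_gt s (1/2) with h | h
  · rw [h1 s ⟨hs, h⟩]
  rcases le_or_gt s 1 with h2 | h2
  · have := hanti (Set.mem_Icc.2 ⟨le_rfl, by norm_num⟩) (Set.mem_Icc.2 ⟨h.le, h2⟩) h.le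
    rwa [h1 (1/2) ⟨by norm_num, le_rfl⟩] at this
  · rw [h0 s h2.le]; norm_num

lemma etaStar_nonneg {η : ℝ → ℝ} (hη : etaOK η) {s : ℝ} (hs : 0 ≤ s) : 0 ≤ etaStar η s := by
  unfold etaStar
  split
  · exact le_refl _
  · exact eta_nonneg hη hs

lemma etaStar_le_eta {η : ℝ → ℝ} (hη : etaOK η) {s : ℝ} (hs : 0 ≤ s) : etaStar η s ≤ η s := by
  unfold etaStar
  split
  · exact eta_nonneg hη hs
  · exact le_refl _

lemma Pset_measurable (R : ℝ) : MeasurableSet (Pset R) := by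
  have hn : Continuous fun q : E2 × ℝ => ‖q.1‖ := continuous_fst.norm
  have h1 : MeasurableSet {q : E2 × ℝ | 1 < ‖q.1‖} :=
    measurableSet_lt measurable_const hn.measurable
  have h2 : MeasurableSet {q : E2 × ℝ | 0 ≤ q.2} :=
    measurableSet_le measurable_const measurable_snd
  have h3 : MeasurableSet {q : E2 × ℝ | (‖q.1‖ - 1) ^ 2 + q.2 ≤ R} :=
    measurableSet_le (((hn.sub continuous_const).pow 2).add continuous_snd).measurable
      measurable_const
  have : Pset R = {q : E2 × ℝ | 1 < ‖q.1‖} ∩ ({q : E2 × ℝ | 0 ≤ q.2} ∩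
      {q : E2 × ℝ | (‖q.1‖ - 1) ^ 2 + q.2 ≤ R}) := by
    ext q; simp [Pset, Omega, Set.mem_setOf_eq, and_assoc]
  rw [this]
  exact h1.inter (h2.inter h3)

lemma step1 (p θ κ C₀ : ℝ) (hp : 1 < p) (hθ : 0 < θ) (hC₀ : 0 < C₀)
    (η : ℝ → ℝ) (hη : etaOK η) (δ T R : ℝ) (hδ : 0 < δ) (hR1 : 1 < R) (hRT : R < T)
    (w : E2 → ℝ → ℝ) (hwm : Measurable (fun q : E2 × ℝ => w q.1 q.2))
    (hw0 : ∀ x t, x ∈ Omega → 0 ≤ t → t < T → 0 ≤ w x t)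
    (hint : IntegrableOn (fun q : E2 × ℝ => w q.1 q.2) (Pset R))
    (hcrit : δ + ∫ q in Pset R, w q.1 q.2 * psi η p R q.1 q.2
            ≤ C₀ * R ^ (-(θ / (p / (p - 1)))) * Real.log R ^ (κ / (p / (p - 1))) *
              (∫ q in Pset R, w q.1 q.2 * psiStar η p R q.1 q.2) ^ (1 / p)) :
    δ ≤ C₀ ^ (p/(p-1)) * R ^ (-θ) * Real.log R ^ κ := by
  have hp0 : (0:ℝ) < p := lt_trans one_pos hp
  have hpq : p.HolderConjugate (p/(p-1)) := Real.HolderConjugate.conjExponent hp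
  have hpc0 : (0:ℝ) < p/(p-1) := hpq.symm.pos
  have hpc1 : (1:ℝ) < p/(p-1) := hpq.symm.lt
  have he : (0:ℝ) < 2 * (p/(p-1)) := by positivity
  have hR0 : (0:ℝ) < R := lt_trans one_pos hR1
  have hcη : ContinuousOn η (Set.Ici 0) := hη.1.continuousOn
  -- the clamped continuous version of s ↦ η s
  have hcm : Continuous fun s : ℝ => η (max s 0) :=
    hcη.comp_continuous (continuous_id.max continuous_const) fun s => Set.mem_Ici.2 (le_max_right _ _)
  have ha : Continuous fun q : E2 × ℝ => ((‖q.1‖ - 1) ^ 2 + q.2) / R :=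
    (((continuous_fst.norm.sub continuous_const).pow 2).add continuous_snd).div_const R
  have hrc : Continuous fun y : ℝ => y ^ (2 * (p/(p-1))) := Real.continuous_rpow_const he.le
  set e := 2 * (p/(p-1)) with hedef
  set a := fun q : E2 × ℝ => ((‖q.1‖ - 1) ^ 2 + q.2) / R with hadef
  set G := fun s : ℝ => if s < 1/2 then (0:ℝ) else η (max s 0) with hGdef
  set φ := fun q : E2 × ℝ => η (max (a q) 0) ^ e with hφdef
  set φs := fun q : E2 × ℝ => G (max (a q) 0) ^ e with hφsdef
  have hφc : Continuous φ := hrc.comp (hcm.comp ha)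
  have hGm : Measurable G :=
    Measurable.ite (measurableSet_lt measurable_id measurable_const)
      measurable_const hcm.measurable
  have hφsm : Measurable φs :=
    hrc.measurable.comp (hGm.comp (ha.max continuous_const).measurable)
  -- pointwise bounds
  have hGb : ∀ s : ℝ, 0 ≤ G s ∧ G s ≤ η (max s 0) := by
    intro s
    rw [hGdef]
    dsimp only
    split
    · exact ⟨le_refl 0, eta_nonneg hη (le_max_right _ _)⟩
    · exact ⟨eta_nonneg hη (le_max_right _ _), le_refl _⟩
  have hφ01 : ∀ q, 0 ≤ φ q ∧ φ q ≤ 1 := by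
    intro q
    constructor
    · exact Real.rpow_nonneg (eta_nonneg hη (le_max_right _ _)) e
    · exact Real.rpow_le_one (eta_nonneg hη (le_max_right _ _))
        (eta_le_one hη (le_max_right _ _)) he.le
  have hφs0 : ∀ q, 0 ≤ φs q := fun q => Real.rpow_nonneg (hGb _).1 e
  have hφsφ : ∀ q, φs q ≤ φ q := by
    intro q
    have h2 : G (a q ⊔ 0) ≤ η (a q ⊔ 0) := by
      have h := (hGb (a q ⊔ 0)).2
      rwa [sup_assoc, sup_idem] at h
    exact Real.rpow_le_rpow (hGb _).1 h2 he.le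
  have hφsb : ∀ q, φs q ≤ 1 := fun q => le_trans (hφsφ q) (hφ01 q).2
  -- measurable set
  have hPm : MeasurableSet (Pset R) := Pset_measurable R
  -- integrability
  have hIφ : IntegrableOn (fun q : E2 × ℝ => w q.1 q.2 * φ q) (Pset R) := by
    have h1 : IntegrableOn (fun q : E2 × ℝ => φ q * w q.1 q.2) (Pset R) :=
      hint.bdd_mul hφc.measurable.aestronglyMeasurable
        (c := 1) (Filter.Eventually.of_forall fun q => by rw [Real.norm_eq_abs, abs_of_nonneg (hφ01 q).1]; exact (hφ01 q).2)
    exact h1.congr (Filter.Eventually.of_forall fun q => mul_comm _ _)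
  have hIφs : IntegrableOn (fun q : E2 × ℝ => w q.1 q.2 * φs q) (Pset R) := by
    have h1 : IntegrableOn (fun q : E2 × ℝ => φs q * w q.1 q.2) (Pset R) :=
      hint.bdd_mul hφsm.aestronglyMeasurable
        (c := 1) (Filter.Eventually.of_forall fun q => by rw [Real.norm_eq_abs, abs_of_nonneg (hφs0 q)]; exact hφsb q)
    exact h1.congr (Filter.Eventually.of_forall fun q => mul_comm _ _)
  -- nonnegativity of w on Pset R
  have hwP : ∀ q ∈ Pset R, 0 ≤ w q.1 q.2 := by
    intro q hq
    obtain ⟨hq1, hq2, hq3⟩ := hq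
    have hq2T : q.2 < T := by nlinarith [sq_nonneg (‖q.1‖ - 1)]
    exact hw0 q.1 q.2 hq1 hq2 hq2T
  -- a q is nonneg on Pset R
  have haP : ∀ q ∈ Pset R, 0 ≤ a q ∧ max (a q) 0 = a q := by
    intro q hq
    obtain ⟨hq1, hq2, hq3⟩ := hq
    have h0 : 0 ≤ a q := by
      rw [hadef]
      have : (0:ℝ) ≤ (‖q.1‖ - 1) ^ 2 + q.2 := by positivity
      positivity
    exact ⟨h0, max_eq_left h0⟩
  -- rewrite the integrals
  have hJeq : (∫ q in Pset R, w q.1 q.2 * psi η p R q.1 q.2)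
      = ∫ q in Pset R, w q.1 q.2 * φ q := by
    apply setIntegral_congr_fun hPm
    intro q hq
    have := (haP q hq).2
    simp only [psi, hφdef]
    rw [this]
  have hJseq : (∫ q in Pset R, w q.1 q.2 * psiStar η p R q.1 q.2)
      = ∫ q in Pset R, w q.1 q.2 * φs q := by
    apply setIntegral_congr_fun hPm
    intro q hq
    have h1 := (haP q hq).2
    simp only [psiStar, hφsdef, hGdef, etaStar]
    simp only [h1]
    rfl
  set J := ∫ q in Pset R, w q.1 q.2 * φ q with hJdef
  set Js := ∫ q in Pset R, w q.1 q.2 * φs q with hJsdef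
  have hJ0 : 0 ≤ J :=
    setIntegral_nonneg hPm fun q hq => mul_nonneg (hwP q hq) (hφ01 q).1
  have hJs0 : 0 ≤ Js :=
    setIntegral_nonneg hPm fun q hq => mul_nonneg (hwP q hq) (hφs0 q)
  have hJsJ : Js ≤ J :=
    setIntegral_mono_on hIφs hIφ hPm fun q hq =>
      mul_le_mul_of_nonneg_left (hφsφ q) (hwP q hq)
  -- the criterion
  have hlogR : 0 < Real.log R := Real.log_pos hR1
  set A := C₀ * R ^ (-(θ / (p / (p - 1)))) * Real.log R ^ (κ / (p / (p - 1))) with hAdef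
  have hA0 : 0 < A := by positivity
  have hcrit2 : δ + J ≤ A * J ^ (1/p) := by
    rw [hJeq, hJseq] at hcrit
    calc δ + J ≤ A * Js ^ (1/p) := hcrit
      _ ≤ A * J ^ (1/p) := mul_le_mul_of_nonneg_left
          (Real.rpow_le_rpow hJs0 hJsJ (by positivity)) hA0.le
  -- Young's inequality
  have hy : J ^ (1/p) * A ≤ (J ^ (1/p)) ^ p / p + A ^ (p/(p-1)) / (p/(p-1)) :=
    Real.young_inequality_of_nonneg (Real.rpow_nonneg hJ0 _) hA0.le hpq
  have hJp : (J ^ (1/p)) ^ p = J := by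
    rw [← Real.rpow_mul hJ0, one_div, inv_mul_cancel₀ hp0.ne', Real.rpow_one]
  have hJdiv : J / p ≤ J := div_le_self hJ0 hp.le
  have hAdiv : A ^ (p/(p-1)) / (p/(p-1)) ≤ A ^ (p/(p-1)) :=
    div_le_self (Real.rpow_nonneg hA0.le _) hpc1.le
  have hδA : δ ≤ A ^ (p/(p-1)) := by
    rw [hJp] at hy
    have h2 : A * J ^ (1/p) = J ^ (1/p) * A := mul_comm _ _
    rw [h2] at hcrit2
    linarith
  -- compute A ^ (p/(p-1))
  have hApc : A ^ (p/(p-1)) = C₀ ^ (p/(p-1)) * R ^ (-θ) * Real.log R ^ κ := by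
    rw [hAdef, Real.mul_rpow (by positivity) (Real.rpow_nonneg hlogR.le _),
      Real.mul_rpow hC₀.le (Real.rpow_nonneg hR0.le _),
      ← Real.rpow_mul hR0.le, ← Real.rpow_mul hlogR.le,
      show -(θ / (p/(p-1))) * (p/(p-1)) = -θ from by
        rw [neg_mul, div_mul_cancel₀ θ hpc0.ne'],
      div_mul_cancel₀ κ hpc0.ne']
  rw [hApc] at hδA
  exact hδA


/-- Key lemma, case `θ > 0`: under the criterion
`δ + ∬_{P(R)} w ψ_R ≤ C₀ R^{−θ/p'} (log R)^{κ/p'} (∬_{P(R)} w ψ*_R)^{1/p}` for all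
`R ∈ [R₁,T)`, one gets `T ≤ C δ^{−1/θ} (log δ⁻¹)^{κ/θ}`. -/
theorem statement9 (p θ κ C₀ R₁ : ℝ) (hp : 1 < p) (hθ : 0 < θ) (hC₀ : 0 < C₀)
    (hR₁ : 1 < R₁) (η : ℝ → ℝ) (hη : etaOK η) :
    ∃ C > (0 : ℝ), ∃ δ₀ ∈ Set.Ioo (0 : ℝ) 1,
      ∀ δ : ℝ, 0 < δ → δ ≤ δ₀ → ∀ T : ℝ, R₁ < T →
      ∀ w : E2 → ℝ → ℝ,
        Measurable (fun q : E2 × ℝ => w q.1 q.2) →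
        (∀ x : E2, ∀ t : ℝ, x ∈ Omega → 0 ≤ t → t < T → 0 ≤ w x t) →
        (∀ R ∈ Set.Ioo (0 : ℝ) T,
          IntegrableOn (fun q : E2 × ℝ => w q.1 q.2) (Pset R)) →
        (∀ R : ℝ, R₁ ≤ R → R < T →
          δ + ∫ q in Pset R, w q.1 q.2 * psi η p R q.1 q.2
            ≤ C₀ * R ^ (-(θ / (p / (p - 1)))) * Real.log R ^ (κ / (p / (p - 1))) *
              (∫ q in Pset R, w q.1 q.2 * psiStar η p R q.1 q.2) ^ (1 / p)) →
        T ≤ C * δ ^ (-(1 / θ)) * Real.log δ⁻¹ ^ (κ / θ) := by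
  have hpq : p.HolderConjugate (p/(p-1)) := Real.HolderConjugate.conjExponent hp
  have hpc0 : (0:ℝ) < p/(p-1) := hpq.symm.pos
  have hC₂ : (0:ℝ) < C₀ ^ (p/(p-1)) * 2 ^ θ * 2 ^ |κ| := by positivity
  have hT₀1 : (1:ℝ) < R₁ + 4 := by linarith
  obtain ⟨C, hC0, δ₀, hδ₀, hmain⟩ :=
    inv_aux θ κ (C₀ ^ (p/(p-1)) * 2 ^ θ * 2 ^ |κ|) (R₁ + 4) hθ hC₂ hT₀1
  refine ⟨C, hC0, δ₀, hδ₀, ?_⟩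
  intro δ hδ hδδ₀ T hT w hwm hw0 hint hcrit
  have hT1 : 1 < T := lt_trans hR₁ hT
  apply hmain δ hδ hδδ₀ T hT1
  rcases le_or_gt T (R₁ + 4) with hTT₀ | hTT₀
  · exact Or.inl hTT₀
  right
  have hRR₁ : R₁ ≤ (R₁ + T)/2 := by linarith
  have hR1 : 1 < (R₁ + T)/2 := lt_of_lt_of_le hR₁ hRR₁
  have hRT : (R₁ + T)/2 < T := by linarith
  have hR0 : (0:ℝ) < (R₁ + T)/2 := lt_trans one_pos hR1
  have hδR := step1 p θ κ C₀ hp hθ hC₀ η hη δ T ((R₁ + T)/2) hδ hR1 hRT w hwm hw0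
    (hint ((R₁ + T)/2) ⟨hR0, hRT⟩) (hcrit ((R₁ + T)/2) hRR₁ hRT)
  have hT4 : (4:ℝ) < T := by linarith
  have hT0 : (0:ℝ) < T := by linarith
  have hTh : T/2 ≤ (R₁ + T)/2 := by linarith
  have h1 : ((R₁ + T)/2) ^ (-θ) ≤ 2 ^ θ * T ^ (-θ) := by
    have h2 : ((R₁ + T)/2) ^ (-θ) ≤ (T/2) ^ (-θ) :=
      Real.rpow_le_rpow_of_nonpos (by linarith) hTh (neg_nonpos.mpr hθ.le)
    calc ((R₁ + T)/2) ^ (-θ) ≤ (T/2) ^ (-θ) := h2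
      _ = 2 ^ θ * T ^ (-θ) := by
          rw [Real.div_rpow hT0.le (by norm_num : (0:ℝ) ≤ 2),
            Real.rpow_neg (by norm_num : (0:ℝ) ≤ 2) θ, div_inv_eq_mul, mul_comm]
  have hlogR : 0 < Real.log ((R₁ + T)/2) := Real.log_pos hR1
  have hlogT : 0 < Real.log T := Real.log_pos hT1
  have h4 : Real.log ((R₁ + T)/2) ^ κ ≤ 2 ^ |κ| * Real.log T ^ κ := by
    rcases le_or_gt 0 κ with hκ | hκ
    · have h5 : Real.log ((R₁ + T)/2) ^ κ ≤ Real.log T ^ κ :=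
        Real.rpow_le_rpow hlogR.le (Real.log_le_log hR0 hRT.le) hκ
      have h6 : (1:ℝ) ≤ 2 ^ |κ| := Real.one_le_rpow (by norm_num) (abs_nonneg κ)
      have hX : 0 ≤ Real.log T ^ κ := Real.rpow_nonneg hlogT.le κ
      calc Real.log ((R₁ + T)/2) ^ κ ≤ Real.log T ^ κ := h5
        _ = 1 * Real.log T ^ κ := (one_mul _).symm
        _ ≤ 2 ^ |κ| * Real.log T ^ κ := mul_le_mul_of_nonneg_right h6 hX
    · have hsq : Real.sqrt T ≤ (R₁ + T)/2 := by
        have h7 : Real.sqrt T ≤ T/2 := by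
          nlinarith [Real.sq_sqrt hT0.le, Real.sqrt_nonneg T]
        linarith
      have h8 : Real.log T / 2 ≤ Real.log ((R₁ + T)/2) := by
        rw [← Real.log_sqrt hT0.le]
        exact Real.log_le_log (Real.sqrt_pos.mpr hT0) hsq
      have h9 : Real.log ((R₁ + T)/2) ^ κ ≤ (Real.log T / 2) ^ κ :=
        Real.rpow_le_rpow_of_nonpos (by linarith) h8 hκ.le
      have h10 : (Real.log T / 2) ^ κ = 2 ^ |κ| * Real.log T ^ κ := by
        rw [Real.div_rpow hlogT.le (by norm_num : (0:ℝ) ≤ 2), abs_of_neg hκ,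
          Real.rpow_neg (by norm_num : (0:ℝ) ≤ 2) κ, div_eq_mul_inv, mul_comm]
      linarith
  calc δ ≤ C₀ ^ (p/(p-1)) * ((R₁ + T)/2) ^ (-θ) * Real.log ((R₁ + T)/2) ^ κ := hδR
    _ ≤ C₀ ^ (p/(p-1)) * (2 ^ θ * T ^ (-θ)) * (2 ^ |κ| * Real.log T ^ κ) := by
        apply mul_le_mul
        · exact mul_le_mul_of_nonneg_left h1 (Real.rpow_nonneg hC₀.le _)
        · exact h4
        · exact Real.rpow_nonneg hlogR.le κ
        · positivity
    _ = C₀ ^ (p/(p-1)) * 2 ^ θ * 2 ^ |κ| * T ^ (-θ) * Real.log T ^ κ := by ring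
end
end

section
/- Let p > 1, τ ∈ {0,1}, ζ ∈ [−π/2, π/2], R₀ > 0, let η, ψ_R, ψ*_R, P(R) be as in the context, and set Φ(x) = log|x| for x ∈ Ω. There exists a constant C₅ > 0, depending only on η, p, τ and R₀, such that for every R ≥ R₀ and every (x,t) ∈ P(R), | −Δ_x(Φ ψ_R)(x,t) + τ ∂_t²(Φ ψ_R)(x,t) − e^{iζ} ∂_t(Φ ψ_R)(x,t) | ≤ C₅ R^{-1} Φ(x) [ψ*_R(x,t)]^{1/p}, where | · | is the modulus of a complex number, Δ_x is the Laplacian in the x-variables, and ∂_t, ∂_t² are the first and second t-derivatives. -/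
open MeasureTheory Real Set

noncomputable section

/-! ### Auxiliary lemmas -/

section Aux

variable {η : ℝ → ℝ}

lemma etaCD (hη : etaOK η) : ContDiffOn ℝ 2 η (Set.Ioi 0) :=
  hη.1.mono (Set.Ioi_subset_Ici le_rfl)

lemma eta_hasDeriv (hη : etaOK η) {y : ℝ} (hy : 0 < y) :
    HasDerivAt η (deriv η y) y := by
  have h := (etaCD hη).differentiableOn (by norm_num)
  exact (h.differentiableAt (Ioi_mem_nhds hy)).hasDerivAt

lemma eta1CD (hη : etaOK η) : ContDiffOn ℝ 1 (deriv η) (Set.Ioi 0) :=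
  (etaCD hη).deriv_of_isOpen isOpen_Ioi (by norm_num)

lemma eta1_hasDeriv (hη : etaOK η) {y : ℝ} (hy : 0 < y) :
    HasDerivAt (deriv η) (deriv (deriv η) y) y := by
  have h := (eta1CD hη).differentiableOn (by norm_num)
  exact (h.differentiableAt (Ioi_mem_nhds hy)).hasDerivAt

lemma eta1_cont (hη : etaOK η) : ContinuousOn (deriv η) (Set.Ioi 0) :=
  (eta1CD hη).continuousOn

lemma eta2_cont (hη : etaOK η) : ContinuousOn (deriv (deriv η)) (Set.Ioi 0) := by
  have : ContDiffOn ℝ 0 (deriv (deriv η)) (Set.Ioi 0) :=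
    (eta1CD hη).deriv_of_isOpen isOpen_Ioi (by norm_num)
  exact this.continuousOn

lemma eta_mem (hη : etaOK η) {y : ℝ} (hy : y ∈ Set.Icc (1/2 : ℝ) 1) :
    η y ∈ Set.Icc (0:ℝ) 1 := by
  obtain ⟨-, h12, hanti, h1⟩ := hη
  have e12 : η (1/2) = 1 := h12 _ (by norm_num)
  have e1 : η 1 = 0 := h1 1 le_rfl
  constructor
  · have := hanti hy (by norm_num : (1:ℝ) ∈ Set.Icc (1/2:ℝ) 1) hy.2
    rw [e1] at this; exact this
  · have := hanti (by norm_num : (1/2:ℝ) ∈ Set.Icc (1/2:ℝ) 1) hy hy.1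
    rw [e12] at this; exact this

lemma eta1_zero (hη : etaOK η) {y : ℝ} (hy : 0 < y) (hy2 : y < 1/2) :
    deriv η y = 0 := by
  have hev : η =ᶠ[nhds y] fun _ => (1:ℝ) := by
    filter_upwards [Ioo_mem_nhds hy hy2] with z hz
    exact hη.2.1 z ⟨hz.1.le, hz.2.le⟩
  rw [hev.deriv_eq]; simp

lemma eta2_zero (hη : etaOK η) {y : ℝ} (hy : 0 < y) (hy2 : y < 1/2) :
    deriv (deriv η) y = 0 := by
  have hev : deriv η =ᶠ[nhds y] fun _ => (0:ℝ) := by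
    filter_upwards [Ioo_mem_nhds hy hy2] with z hz
    exact eta1_zero hη hz.1 hz.2
  rw [hev.deriv_eq]; simp

/-- first derivative of `η^m` -/
def dG (η : ℝ → ℝ) (m : ℝ) : ℝ → ℝ := fun y => deriv η y * m * η y ^ (m - 1)

/-- second derivative of `η^m` -/
def ddG (η : ℝ → ℝ) (m : ℝ) : ℝ → ℝ := fun y =>
  deriv (deriv η) y * m * η y ^ (m - 1)
    + deriv η y * m * (deriv η y * (m - 1) * η y ^ (m - 1 - 1))

lemma G_hasDeriv (hη : etaOK η) {m : ℝ} (hm : 1 ≤ m) {y : ℝ} (hy : 0 < y) :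
    HasDerivAt (fun z => η z ^ m) (dG η m y) y :=
  (eta_hasDeriv hη hy).rpow_const (Or.inr hm)

lemma dG_hasDeriv (hη : etaOK η) {m : ℝ} (hm : 2 ≤ m) {y : ℝ} (hy : 0 < y) :
    HasDerivAt (dG η m) (ddG η m y) y := by
  have h1 : HasDerivAt (fun z => deriv η z * m) (deriv (deriv η) y * m) y :=
    (eta1_hasDeriv hη hy).mul_const m
  have h2 : HasDerivAt (fun z => η z ^ (m - 1))
      (deriv η y * (m - 1) * η y ^ (m - 1 - 1)) y :=
    (eta_hasDeriv hη hy).rpow_const (Or.inr (by linarith))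
  have := h1.mul h2
  exact this

/-- the radial profile `ρ ↦ log ρ · η(((ρ-1)²+t)/R)^m` -/
def Ffun (η : ℝ → ℝ) (m t R : ℝ) : ℝ → ℝ := fun ρ =>
  Real.log ρ * η (((ρ - 1) ^ 2 + t) / R) ^ m

def F1fun (η : ℝ → ℝ) (m t R : ℝ) : ℝ → ℝ := fun ρ =>
  η (((ρ - 1) ^ 2 + t) / R) ^ m / ρ
    + Real.log ρ * (dG η m (((ρ - 1) ^ 2 + t) / R) * (2 * (ρ - 1) / R))

def F2fun (η : ℝ → ℝ) (m t R : ℝ) : ℝ → ℝ := fun ρ =>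
  -(η (((ρ - 1) ^ 2 + t) / R) ^ m) / ρ ^ 2
    + 2 * (dG η m (((ρ - 1) ^ 2 + t) / R) * (2 * (ρ - 1) / R)) / ρ
    + Real.log ρ *
        (ddG η m (((ρ - 1) ^ 2 + t) / R) * (2 * (ρ - 1) / R) ^ 2
          + dG η m (((ρ - 1) ^ 2 + t) / R) * (2 / R))

lemma w_hasDeriv (t R ρ : ℝ) :
    HasDerivAt (fun z : ℝ => ((z - 1) ^ 2 + t) / R) (2 * (ρ - 1) / R) ρ := by
  have h := ((((hasDerivAt_id ρ).sub_const 1).pow 2).add_const t).div_const R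
  refine h.congr_deriv (Eq.symm ?_)
  simp only [id_eq, pow_one]
  push_cast; ring

lemma F_hasDeriv (hη : etaOK η) {m : ℝ} (hm : 2 ≤ m) {t R ρ : ℝ}
    (hρ : 0 < ρ) (hw : 0 < ((ρ - 1) ^ 2 + t) / R) :
    HasDerivAt (Ffun η m t R) (F1fun η m t R ρ) ρ := by
  have hG : HasDerivAt (fun z : ℝ => η (((z - 1) ^ 2 + t) / R) ^ m)
      (dG η m (((ρ - 1) ^ 2 + t) / R) * (2 * (ρ - 1) / R)) ρ :=
    by have := (G_hasDeriv hη (m := m) (by linarith) hw).comp ρ (w_hasDeriv t R ρ); exact this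
  have h := (Real.hasDerivAt_log hρ.ne').mul hG
  refine h.congr_deriv (Eq.symm ?_)
  unfold F1fun
  set A := dG η m (((ρ - 1) ^ 2 + t) / R)
  set Gv := η (((ρ - 1) ^ 2 + t) / R) ^ m
  rw [div_add' _ _ _ hρ.ne']
  field_simp

lemma F1_hasDeriv (hη : etaOK η) {m : ℝ} (hm : 2 ≤ m) {t R ρ : ℝ}
    (hρ : 0 < ρ) (hw : 0 < ((ρ - 1) ^ 2 + t) / R) :
    HasDerivAt (F1fun η m t R) (F2fun η m t R ρ) ρ := by
  have hG : HasDerivAt (fun z : ℝ => η (((z - 1) ^ 2 + t) / R) ^ m)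
      (dG η m (((ρ - 1) ^ 2 + t) / R) * (2 * (ρ - 1) / R)) ρ :=
    by have := (G_hasDeriv hη (m := m) (by linarith) hw).comp ρ (w_hasDeriv t R ρ); exact this
  have hdGc : HasDerivAt (fun z : ℝ => dG η m (((z - 1) ^ 2 + t) / R))
      (ddG η m (((ρ - 1) ^ 2 + t) / R) * (2 * (ρ - 1) / R)) ρ :=
    by have := (dG_hasDeriv hη hm hw).comp ρ (w_hasDeriv t R ρ); exact this
  have hlin : HasDerivAt (fun z : ℝ => 2 * (z - 1) / R) (2 / R) ρ := by
    have := (((hasDerivAt_id ρ).sub_const 1).const_mul 2).div_const R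
    refine this.congr_deriv (Eq.symm ?_); ring
  have h1 : HasDerivAt (fun z : ℝ => η (((z - 1) ^ 2 + t) / R) ^ m / z)
      ((dG η m (((ρ - 1) ^ 2 + t) / R) * (2 * (ρ - 1) / R) * ρ
         - η (((ρ - 1) ^ 2 + t) / R) ^ m * 1) / ρ ^ 2) ρ :=
    hG.div (hasDerivAt_id ρ) hρ.ne'
  have h2 := (Real.hasDerivAt_log hρ.ne').mul (hdGc.mul hlin)
  have h := h1.add h2
  refine h.congr_deriv (Eq.symm ?_)
  unfold F2fun
  simp only [Pi.mul_apply]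
  linear_combination
    (-(dG η m (((ρ - 1) ^ 2 + t) / R) * (2 * (ρ - 1) / R)) * ρ⁻¹) *
      mul_inv_cancel₀ hρ.ne'

lemma iter2 (hη : etaOK η) {m : ℝ} (hm : 2 ≤ m) {t R : ℝ}
    {r : ℝ} (hr : 1 < r) {c : ℝ}
    (hw0 : 0 < ((r - 1) ^ 2 + t) / R) :
    iteratedDeriv 2 (fun s : ℝ => Ffun η m t R (Real.sqrt (r ^ 2 + 2 * c * s + s ^ 2))) 0
      = F2fun η m t R r * (c / r) * (c / r)
        + F1fun η m t R r * ((1 * r - c * (c / r)) / r ^ 2) := by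
  have hr0 : (0:ℝ) < r := by linarith
  set Q : ℝ → ℝ := fun s => r ^ 2 + 2 * c * s + s ^ 2 with hQdef
  have hQ0 : Q 0 = r ^ 2 := by simp [hQdef]
  have hsq0 : Real.sqrt (Q 0) = r := by rw [hQ0, Real.sqrt_sq hr0.le]
  set U : Set ℝ := (fun s => Q s) ⁻¹' Set.Ioi 0 ∩
      (fun s => ((Real.sqrt (Q s) - 1) ^ 2 + t) / R) ⁻¹' Set.Ioi 0 with hUdef
  have hQcont : Continuous Q := by fun_prop
  have hUopen : IsOpen U := by
    apply IsOpen.inter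
    · exact isOpen_Ioi.preimage hQcont
    · apply isOpen_Ioi.preimage
      fun_prop
  have hU0 : (0:ℝ) ∈ U := by
    constructor
    · simp only [Set.mem_preimage, Set.mem_Ioi, hQ0]; positivity
    · simpa [Set.mem_preimage, hsq0] using hw0
  have hsqd : ∀ s ∈ U, HasDerivAt (fun z => Real.sqrt (Q z))
      ((c + s) / Real.sqrt (Q s)) s := by
    intro s hs
    have hQs : 0 < Q s := hs.1
    have hQd : HasDerivAt Q (2 * c + 2 * s) s := by
      have := (((hasDerivAt_id s).const_mul (2*c)).const_add (r^2)).add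
        ((hasDerivAt_id s).pow 2)
      refine this.congr_deriv (Eq.symm ?_)
      simp
    have := (Real.hasDerivAt_sqrt hQs.ne').comp s hQd
    refine this.congr_deriv (Eq.symm ?_)
    have hne : Real.sqrt (Q s) ≠ 0 := (Real.sqrt_pos.2 hQs).ne'
    field_simp
  have hcomp : ∀ s ∈ U, HasDerivAt (fun z => Ffun η m t R (Real.sqrt (Q z)))
      (F1fun η m t R (Real.sqrt (Q s)) * ((c + s) / Real.sqrt (Q s))) s := by
    intro s hs
    have hQs : 0 < Q s := hs.1
    have hρpos : 0 < Real.sqrt (Q s) := Real.sqrt_pos.2 hQs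
    exact (F_hasDeriv hη hm hρpos hs.2).comp s (hsqd s hs)
  have hev : deriv (fun z => Ffun η m t R (Real.sqrt (Q z)))
      =ᶠ[nhds 0] fun s => F1fun η m t R (Real.sqrt (Q s)) * ((c + s) / Real.sqrt (Q s)) := by
    filter_upwards [hUopen.mem_nhds hU0] with s hs
    exact (hcomp s hs).deriv
  have h1 : HasDerivAt (fun s => F1fun η m t R (Real.sqrt (Q s)))
      (F2fun η m t R r * (c / r)) 0 := by
    have := (F1_hasDeriv hη hm (by rw [hsq0]; exact hr0) (by rw [hsq0]; exact hw0)).comp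
      0 (hsqd 0 hU0)
    rw [hsq0] at this
    simpa [Function.comp_def] using this
  have h2 : HasDerivAt (fun s => (c + s) / Real.sqrt (Q s))
      ((1 * r - c * (c / r)) / r ^ 2) 0 := by
    have hd : HasDerivAt (fun s : ℝ => c + s) 1 0 := by
      simpa using (hasDerivAt_id (0:ℝ)).const_add c
    have := hd.div (hsqd 0 hU0) (by rw [hsq0]; exact hr0.ne')
    rw [hsq0] at this
    simpa [Pi.div_def] using this
  have hprod := h1.mul h2
  have h2nd : deriv (deriv (fun z => Ffun η m t R (Real.sqrt (Q z)))) 0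
      = F2fun η m t R r * (c / r) * (c / r)
        + F1fun η m t R r * ((1 * r - c * (c / r)) / r ^ 2) := by
    rw [hev.deriv_eq]
    have := hprod.deriv
    rw [show (fun s => F1fun η m t R (Real.sqrt (Q s)) * ((c + s) / Real.sqrt (Q s))) = ((fun s => F1fun η m t R (Real.sqrt (Q s))) * fun s => (c + s) / Real.sqrt (Q s)) from rfl, this]
    have e0 : Real.sqrt (Q 0) = r := hsq0
    simp [e0]
  rw [iteratedDeriv_succ, iteratedDeriv_one]
  exact h2nd

lemma inner_hasDeriv {A R : ℝ} (t : ℝ) :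
    HasDerivAt (fun u : ℝ => (A + u) / R) R⁻¹ t := by
  have := ((hasDerivAt_id t).const_add A).div_const R
  simpa [one_div] using this

lemma psi_t_hasDeriv (hη : etaOK η) {m : ℝ} (hm : 2 ≤ m) {A R L t : ℝ}
    (hw : 0 < (A + t) / R) :
    HasDerivAt (fun u : ℝ => L * η ((A + u) / R) ^ m)
      (L * (dG η m ((A + t) / R) * R⁻¹)) t :=
  by have := (((G_hasDeriv hη (m := m) (by linarith) hw).comp t (inner_hasDeriv (A := A) (R := R) t)).const_mul L); exact this

lemma deriv_t_eq (hη : etaOK η) {m : ℝ} (hm : 2 ≤ m) {A R L t : ℝ}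
    (hw : 0 < (A + t) / R) :
    deriv (fun u : ℝ => L * η ((A + u) / R) ^ m) t
      = L * (dG η m ((A + t) / R) * R⁻¹) :=
  (psi_t_hasDeriv hη hm hw).deriv

lemma deriv_tt_eq (hη : etaOK η) {m : ℝ} (hm : 2 ≤ m) {A R L t : ℝ}
    (hw : 0 < (A + t) / R) :
    deriv (deriv (fun u : ℝ => L * η ((A + u) / R) ^ m)) t
      = L * (ddG η m ((A + t) / R) * R⁻¹ * R⁻¹) := by
  have hev : deriv (fun u : ℝ => L * η ((A + u) / R) ^ m)
      =ᶠ[nhds t] fun u => L * (dG η m ((A + u) / R) * R⁻¹) := by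
    have hopen : IsOpen {u : ℝ | 0 < (A + u) / R} := by
      have hc : Continuous fun u : ℝ => (A + u) / R := by fun_prop
      exact isOpen_Ioi.preimage hc
    filter_upwards [hopen.mem_nhds hw] with u hu
    exact deriv_t_eq hη hm hu
  rw [hev.deriv_eq]
  have h : HasDerivAt (fun u : ℝ => L * (dG η m ((A + u) / R) * R⁻¹))
      (L * (ddG η m ((A + t) / R) * R⁻¹ * R⁻¹)) t := by
    have h1 : HasDerivAt (fun u : ℝ => dG η m ((A + u) / R))
        (ddG η m ((A + t) / R) * R⁻¹) t :=
      by have := (dG_hasDeriv hη hm hw).comp t (inner_hasDeriv (A := A) (R := R) t); exact this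
    exact (h1.mul_const R⁻¹).const_mul L
  exact h.deriv

lemma norm_line (x : E2) (i : Fin 2) (s : ℝ) :
    ‖x + s • EuclideanSpace.single i (1 : ℝ)‖
      = Real.sqrt (‖x‖ ^ 2 + 2 * (x i) * s + s ^ 2) := by
  rw [← Real.sqrt_sq (norm_nonneg (x + s • EuclideanSpace.single i (1:ℝ)))]
  congr 1
  rw [norm_add_sq_real]
  have h1 : (inner ℝ x (s • EuclideanSpace.single i (1:ℝ)) : ℝ) = s * x i := by
    rw [real_inner_smul_right, EuclideanSpace.inner_single_right]
    simp
  have h2 : ‖s • EuclideanSpace.single i (1:ℝ)‖ = |s| := by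
    rw [norm_smul, EuclideanSpace.norm_single]
    simp
  rw [h1, h2, sq_abs]
  ring

lemma coord_sq_le (x : E2) (i : Fin 2) : (x i) ^ 2 ≤ ‖x‖ ^ 2 := by
  have h : |x i| ≤ ‖x‖ := by
    have := abs_real_inner_le_norm x (EuclideanSpace.single i (1:ℝ))
    rw [EuclideanSpace.inner_single_right] at this
    simpa using this
  calc (x i) ^ 2 = |x i| ^ 2 := (sq_abs _).symm
    _ ≤ ‖x‖ ^ 2 := by gcongr

lemma sum_coord_sq (x : E2) : (x 0) ^ 2 + (x 1) ^ 2 = ‖x‖ ^ 2 := by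
  rw [EuclideanSpace.norm_eq, Real.sq_sqrt (by positivity)]
  simp [Fin.sum_univ_two, sq_abs]

lemma alg_sum (K1 K2 r c0 c1 : ℝ) (hr : r ≠ 0) (h : c0^2 + c1^2 = r^2) :
    K2 * (c0/r) * (c0/r) + K1 * ((1*r - c0*(c0/r))/r^2)
      + (K2 * (c1/r) * (c1/r) + K1 * ((1*r - c1*(c1/r))/r^2)) = K2 + K1 / r := by
  linear_combination (K2 * r⁻¹^2 - K1 * r⁻¹^3) * h
    + (K2*(r*r⁻¹+1) - K1*r⁻¹*(r*r⁻¹-1)) * mul_inv_cancel₀ hr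

lemma lapx_eq (hη : etaOK η) {m : ℝ} (hm : 2 ≤ m) {t R : ℝ}
    {x : E2} (hx : 1 < ‖x‖) (hw : 0 < ((‖x‖ - 1) ^ 2 + t) / R) :
    lapx (fun y : E2 => Ffun η m t R ‖y‖) x
      = F2fun η m t R ‖x‖ + F1fun η m t R ‖x‖ / ‖x‖ := by
  have key : ∀ i : Fin 2,
      iteratedDeriv 2 (fun s : ℝ => Ffun η m t R ‖x + s • EuclideanSpace.single i (1:ℝ)‖) 0
        = F2fun η m t R ‖x‖ * (x i / ‖x‖) * (x i / ‖x‖)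
          + F1fun η m t R ‖x‖ * ((1 * ‖x‖ - x i * (x i / ‖x‖)) / ‖x‖ ^ 2) := by
    intro i
    have hfe : (fun s : ℝ => Ffun η m t R ‖x + s • EuclideanSpace.single i (1:ℝ)‖)
        = fun s : ℝ => Ffun η m t R (Real.sqrt (‖x‖ ^ 2 + 2 * (x i) * s + s ^ 2)) := by
      funext s; rw [norm_line]
    rw [hfe]
    exact iter2 hη hm hx hw
  have hx0 : (‖x‖ : ℝ) ≠ 0 := by positivity
  rw [lapx, Fin.sum_univ_two, key 0, key 1]
  exact alg_sum _ _ _ _ _ hx0 (sum_coord_sq x)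

lemma tri_helper (τ ζ u v w : ℝ) (hτ1 : |τ| ≤ 1) :
    ‖(-(u:ℂ) + (τ:ℂ) * (v:ℂ) - Complex.exp (Complex.I * (ζ:ℂ)) * (w:ℂ))‖
      ≤ |u| + |v| + |w| := by
  have h1 : ‖(-(u:ℂ) + (τ:ℂ)*(v:ℂ) - Complex.exp (Complex.I*(ζ:ℂ))*(w:ℂ))‖
      ≤ ‖(-(u:ℂ) + (τ:ℂ)*(v:ℂ))‖
        + ‖(Complex.exp (Complex.I*(ζ:ℂ))*(w:ℂ))‖ := by
    simpa [sub_eq_add_neg] using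
      norm_add_le (-(u:ℂ) + (τ:ℂ)*(v:ℂ)) (-(Complex.exp (Complex.I*(ζ:ℂ))*(w:ℂ)))
  have h2 : ‖(-(u:ℂ) + (τ:ℂ)*(v:ℂ))‖ ≤ |u| + |τ| * |v| := by
    calc ‖(-(u:ℂ) + (τ:ℂ)*(v:ℂ))‖
        ≤ ‖(-(u:ℂ))‖ + ‖((τ:ℂ)*(v:ℂ))‖ := norm_add_le _ _
      _ = |u| + |τ| * |v| := by
          rw [norm_neg, norm_mul]
          simp [Complex.norm_real]
  have h3 : ‖(Complex.exp (Complex.I*(ζ:ℂ))*(w:ℂ))‖ = |w| := by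
    rw [norm_mul, Complex.norm_exp]
    simp [Complex.norm_real, Complex.mul_re]
  have h4 : |τ| * |v| ≤ |v| := mul_le_of_le_one_left (abs_nonneg v) hτ1
  linarith

end Aux

lemma abs_add4 (a b c d : ℝ) : |a + b + c + d| ≤ |a| + |b| + |c| + |d| := by
  calc |a + b + c + d| ≤ |a + b + c| + |d| := abs_add_le _ _
    _ ≤ (|a| + |b| + |c|) + |d| := add_le_add_left (abs_add_three a b c) _

set_option maxHeartbeats 1000000 in
/-- With `Φ(x) = log|x|`: there is `C₅ > 0`, depending only on `η`, `p`, `τ` and `R₀`,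
such that for every `R ≥ R₀` and `(x,t) ∈ P(R)`,
`|−Δ_x(Φψ_R) + τ ∂_t²(Φψ_R) − e^{iζ} ∂_t(Φψ_R)| ≤ C₅ R⁻¹ Φ(x) [ψ*_R(x,t)]^{1/p}`. -/
theorem statement13 (p τ ζ R₀ : ℝ) (hp : 1 < p) (hτ : τ = 0 ∨ τ = 1)
    (hζ : ζ ∈ Set.Icc (-(π / 2)) (π / 2)) (hR₀ : 0 < R₀)
    (η : ℝ → ℝ) (hη : etaOK η) :
    ∃ C₅ > (0 : ℝ), ∀ R : ℝ, R₀ ≤ R → ∀ q ∈ Pset R,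
      (fun z : ℂ => ‖z‖)
        (-((lapx (fun x : E2 => Real.log ‖x‖ * psi η p R x q.2) q.1 : ℝ) : ℂ)
          + (τ : ℂ) *
            ((deriv (deriv (fun t : ℝ => Real.log ‖q.1‖ * psi η p R q.1 t)) q.2 : ℝ) : ℂ)
          - Complex.exp (Complex.I * (ζ : ℂ)) *
            ((deriv (fun t : ℝ => Real.log ‖q.1‖ * psi η p R q.1 t) q.2 : ℝ) : ℂ))
        ≤ C₅ * R⁻¹ * Real.log ‖q.1‖ * psiStar η p R q.1 q.2 ^ (1 / p) := by
  have hp1 : (0:ℝ) < p - 1 := by linarith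
  have hp0 : (0:ℝ) < p := by linarith
  have hm2 : 2 < 2 * (p / (p - 1)) := by
    have h : 1 < p / (p - 1) := by
      rw [lt_div_iff₀ hp1]; linarith
    linarith
  have hm0 : (0:ℝ) < 2 * (p / (p - 1)) := by linarith
  have hm0' : (0:ℝ) ≤ 2 * (p / (p - 1)) := hm0.le
  have hm1' : (0:ℝ) ≤ 2 * (p / (p - 1)) - 1 := by linarith
  have hpd0 : (0:ℝ) ≤ p / (p - 1) := le_of_lt (div_pos hp0 hp1)
  have hIcc : Set.Icc (1/2 : ℝ) 1 ⊆ Set.Ioi 0 := fun y hy =>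
    lt_of_lt_of_le (by norm_num) hy.1
  obtain ⟨M₁, hM₁⟩ := isCompact_Icc.exists_bound_of_continuousOn
    ((eta1_cont hη).mono hIcc)
  obtain ⟨M₂, hM₂⟩ := isCompact_Icc.exists_bound_of_continuousOn
    ((eta2_cont hη).mono hIcc)
  have hM₁0 : 0 ≤ M₁ := le_trans (norm_nonneg _) (hM₁ (1/2) (by norm_num))
  have hM₂0 : 0 ≤ M₂ := le_trans (norm_nonneg _) (hM₂ (1/2) (by norm_num))
  have hK0 : 0 ≤ (2 * (p / (p - 1))) * M₂ + (2 * (p / (p - 1))) * ((2 * (p / (p - 1))) - 1) * M₁ ^ 2 := by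
    have h1 : 0 ≤ (2 * (p / (p - 1))) * M₂ := mul_nonneg hm0' hM₂0
    have h2 : 0 ≤ (2 * (p / (p - 1))) * ((2 * (p / (p - 1))) - 1) * M₁ ^ 2 :=
      mul_nonneg (mul_nonneg hm0' hm1') (sq_nonneg _)
    linarith
  have hmM₁0 : 0 ≤ (2 * (p / (p - 1))) * M₁ := mul_nonneg hm0' hM₁0
  have hC0 : 0 < 9 * ((2 * (p / (p - 1))) * M₁) + 4 * ((2 * (p / (p - 1))) * M₂ + (2 * (p / (p - 1))) * ((2 * (p / (p - 1))) - 1) * M₁ ^ 2)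
      + ((2 * (p / (p - 1))) * M₂ + (2 * (p / (p - 1))) * ((2 * (p / (p - 1))) - 1) * M₁ ^ 2) / R₀ + 1 := by
    have h2 : 0 ≤ ((2 * (p / (p - 1))) * M₂ + (2 * (p / (p - 1))) * ((2 * (p / (p - 1))) - 1) * M₁ ^ 2) / R₀ := div_nonneg hK0 hR₀.le
    linarith
  refine ⟨9 * ((2 * (p / (p - 1))) * M₁) + 4 * ((2 * (p / (p - 1))) * M₂ + (2 * (p / (p - 1))) * ((2 * (p / (p - 1))) - 1) * M₁ ^ 2)
      + ((2 * (p / (p - 1))) * M₂ + (2 * (p / (p - 1))) * ((2 * (p / (p - 1))) - 1) * M₁ ^ 2) / R₀ + 1, hC0, ?_⟩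
  intro R hRR q hq
  obtain ⟨hx1, ht0, hPR⟩ := hq
  have hx : (1:ℝ) < ‖q.1‖ := hx1
  have hRpos : 0 < R := lt_of_lt_of_le hR₀ hRR
  have hr0 : (0:ℝ) < ‖q.1‖ := by linarith
  have ha : (0:ℝ) < ‖q.1‖ - 1 := by linarith
  have hs₀pos : 0 < (((‖q.1‖ - 1) ^ 2 + q.2) / R) := div_pos (by nlinarith) hRpos
  have hs₀le : (((‖q.1‖ - 1) ^ 2 + q.2) / R) ≤ 1 := (div_le_one hRpos).2 hPR
  have hL : 0 < Real.log ‖q.1‖ := Real.log_pos hx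
  have hL0 : 0 ≤ Real.log ‖q.1‖ := hL.le
  have hRi0 : 0 ≤ R⁻¹ := inv_nonneg.2 hRpos.le
  -- rewrite the three differential expressions
  have hlap : lapx (fun y : E2 => Real.log ‖y‖ * psi η p R y q.2) q.1
      = F2fun η (2 * (p / (p - 1))) q.2 R ‖q.1‖ + F1fun η (2 * (p / (p - 1))) q.2 R ‖q.1‖ / ‖q.1‖ :=
    lapx_eq hη hm2.le hx hs₀pos
  have hd1 : deriv (fun u : ℝ => Real.log ‖q.1‖ * psi η p R q.1 u) q.2
      = Real.log ‖q.1‖ * (dG η (2 * (p / (p - 1))) (((‖q.1‖ - 1) ^ 2 + q.2) / R) * R⁻¹) :=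
    deriv_t_eq hη hm2.le hs₀pos
  have hd2 : deriv (deriv (fun u : ℝ => Real.log ‖q.1‖ * psi η p R q.1 u)) q.2
      = Real.log ‖q.1‖ * (ddG η (2 * (p / (p - 1))) (((‖q.1‖ - 1) ^ 2 + q.2) / R) * R⁻¹ * R⁻¹) :=
    deriv_tt_eq hη hm2.le hs₀pos
  rw [hlap, hd1, hd2]
  have hτ1 : |τ| ≤ 1 := by rcases hτ with h | h <;> simp [h]
  refine le_trans (tri_helper τ ζ _ _ _ hτ1) ?_
  by_cases hlt : (((‖q.1‖ - 1) ^ 2 + q.2) / R) < 1 / 2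
  · -- inner region: everything vanishes
    have hA0 : dG η (2 * (p / (p - 1))) (((‖q.1‖ - 1) ^ 2 + q.2) / R) = 0 := by
      simp only [dG]
      rw [eta1_zero hη hs₀pos hlt]; ring
    have hB0 : ddG η (2 * (p / (p - 1))) (((‖q.1‖ - 1) ^ 2 + q.2) / R) = 0 := by
      simp only [ddG]
      rw [eta1_zero hη hs₀pos hlt, eta2_zero hη hs₀pos hlt]; ring
    have hlap0 : F2fun η (2 * (p / (p - 1))) q.2 R ‖q.1‖ + F1fun η (2 * (p / (p - 1))) q.2 R ‖q.1‖ / ‖q.1‖ = 0 := by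
      simp only [F2fun, F1fun, hA0, hB0]
      ring
    have hps : psiStar η p R q.1 q.2 = 0 := by
      unfold psiStar etaStar
      rw [if_pos hlt]
      exact Real.zero_rpow (ne_of_gt hm0)
    rw [hlap0, hA0, hB0, hps, Real.zero_rpow (one_div_ne_zero hp0.ne')]
    simp
  · -- outer region
    push_neg at hlt
    have hmem : (((‖q.1‖ - 1) ^ 2 + q.2) / R) ∈ Set.Icc (1/2 : ℝ) 1 := ⟨hlt, hs₀le⟩
    have he := eta_mem hη hmem
    have hξ0 : 0 ≤ η (((‖q.1‖ - 1) ^ 2 + q.2) / R) ^ ((2 * (p / (p - 1))) - 2) := Real.rpow_nonneg he.1 _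
    have hξ10 : 0 ≤ η (((‖q.1‖ - 1) ^ 2 + q.2) / R) ^ ((2 * (p / (p - 1))) - 1) := Real.rpow_nonneg he.1 _
    have hps : psiStar η p R q.1 q.2 ^ (1/p) = η (((‖q.1‖ - 1) ^ 2 + q.2) / R) ^ ((2 * (p / (p - 1))) - 2) := by
      unfold psiStar etaStar
      rw [if_neg (not_lt.2 hlt), ← Real.rpow_mul he.1]
      congr 1
      field_simp
      ring
    have hrpow_le : η (((‖q.1‖ - 1) ^ 2 + q.2) / R) ^ ((2 * (p / (p - 1))) - 1) ≤ η (((‖q.1‖ - 1) ^ 2 + q.2) / R) ^ ((2 * (p / (p - 1))) - 2) := by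
      rcases eq_or_lt_of_le he.1 with h0 | h0
      · rw [← h0, Real.zero_rpow (by linarith : (2 * (p / (p - 1))) - 1 ≠ 0),
          Real.zero_rpow (by linarith : (2 * (p / (p - 1))) - 2 ≠ 0)]
      · exact Real.rpow_le_rpow_of_exponent_ge h0 he.2 (by linarith)
    have hη1 : |deriv η (((‖q.1‖ - 1) ^ 2 + q.2) / R)| ≤ M₁ := by
      have h := hM₁ _ hmem; rwa [Real.norm_eq_abs] at h
    have hη2 : |deriv (deriv η) (((‖q.1‖ - 1) ^ 2 + q.2) / R)| ≤ M₂ := by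
      have h := hM₂ _ hmem; rwa [Real.norm_eq_abs] at h
    have hAabs : |dG η (2 * (p / (p - 1))) (((‖q.1‖ - 1) ^ 2 + q.2) / R)| ≤ (2 * (p / (p - 1))) * M₁ * (η (((‖q.1‖ - 1) ^ 2 + q.2) / R) ^ ((2 * (p / (p - 1))) - 2)) := by
      simp only [dG, abs_mul]
      rw [abs_two, abs_of_nonneg hpd0, abs_of_nonneg hξ10]
      refine le_trans (mul_le_mul (mul_le_mul_of_nonneg_right hη1 hm0') hrpow_le hξ10
        (mul_nonneg hM₁0 hm0')) (le_of_eq (by ring))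
    have hBabs : |ddG η (2 * (p / (p - 1))) (((‖q.1‖ - 1) ^ 2 + q.2) / R)| ≤ ((2 * (p / (p - 1))) * M₂ + (2 * (p / (p - 1))) * ((2 * (p / (p - 1))) - 1) * M₁ ^ 2) * (η (((‖q.1‖ - 1) ^ 2 + q.2) / R) ^ ((2 * (p / (p - 1))) - 2)) := by
      simp only [ddG]
      rw [show (2 * (p / (p - 1))) - 1 - 1 = (2 * (p / (p - 1))) - 2 by ring]
      refine le_trans (abs_add_le _ _) ?_
      have h1 : |deriv (deriv η) (((‖q.1‖ - 1) ^ 2 + q.2) / R) * (2 * (p / (p - 1))) * (η (((‖q.1‖ - 1) ^ 2 + q.2) / R) ^ ((2 * (p / (p - 1))) - 1))|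
          ≤ M₂ * (2 * (p / (p - 1))) * (η (((‖q.1‖ - 1) ^ 2 + q.2) / R) ^ ((2 * (p / (p - 1))) - 2)) := by
        simp only [abs_mul]
        rw [abs_two, abs_of_nonneg hpd0, abs_of_nonneg hξ10]
        exact mul_le_mul (mul_le_mul_of_nonneg_right hη2 hm0') hrpow_le hξ10
          (mul_nonneg hM₂0 hm0')
      have h2 : |deriv η (((‖q.1‖ - 1) ^ 2 + q.2) / R) * (2 * (p / (p - 1))) * (deriv η (((‖q.1‖ - 1) ^ 2 + q.2) / R) * ((2 * (p / (p - 1))) - 1) * (η (((‖q.1‖ - 1) ^ 2 + q.2) / R) ^ ((2 * (p / (p - 1))) - 2)))|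
          ≤ M₁ * (2 * (p / (p - 1))) * (M₁ * ((2 * (p / (p - 1))) - 1) * (η (((‖q.1‖ - 1) ^ 2 + q.2) / R) ^ ((2 * (p / (p - 1))) - 2))) := by
        simp only [abs_mul]
        rw [abs_two, abs_of_nonneg hpd0, abs_of_nonneg hm1', abs_of_nonneg hξ0]
        refine mul_le_mul (mul_le_mul_of_nonneg_right hη1 hm0') ?_ ?_
          (mul_nonneg hM₁0 hm0')
        · exact mul_le_mul_of_nonneg_right (mul_le_mul_of_nonneg_right hη1 hm1') hξ0
        · exact mul_nonneg (mul_nonneg (abs_nonneg _) hm1') hξ0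
      refine le_trans (add_le_add h1 h2) (le_of_eq (by ring))
    -- elementary inequalities
    have halog : (‖q.1‖ - 1) / ‖q.1‖ ≤ Real.log ‖q.1‖ := by
      have h := Real.add_one_le_exp (-(Real.log ‖q.1‖))
      rw [Real.exp_neg, Real.exp_log hr0] at h
      rw [div_le_iff₀ hr0]
      have h2 : ‖q.1‖ * ‖q.1‖⁻¹ = 1 := mul_inv_cancel₀ hr0.ne'
      nlinarith [mul_le_mul_of_nonneg_left h hr0.le]
    have ha2 : (‖q.1‖ - 1) ^ 2 ≤ R := by nlinarith
    have hW0 : 0 ≤ (2 * (‖q.1‖ - 1) / R) := div_nonneg (by linarith) hRpos.le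
    have hWr0 : 0 ≤ (2 * (‖q.1‖ - 1) / R) / ‖q.1‖ := div_nonneg hW0 hr0.le
    have hW2 : (2 * (‖q.1‖ - 1) / R) ^ 2 ≤ 4 / R := by
      rw [show (2 * (‖q.1‖ - 1) / R) ^ 2 = 4 * (‖q.1‖ - 1) ^ 2 / R ^ 2 by ring,
        div_le_div_iff₀ (pow_pos hRpos 2) hRpos]
      nlinarith
    have hWr : (2 * (‖q.1‖ - 1) / R) / ‖q.1‖ ≤ 2 * (Real.log ‖q.1‖) / R := by
      rw [show (2 * (‖q.1‖ - 1) / R) / ‖q.1‖ = (2 / R) * ((‖q.1‖ - 1) / ‖q.1‖) by ring,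
        show 2 * (Real.log ‖q.1‖) / R = (2 / R) * (Real.log ‖q.1‖) by ring]
      exact mul_le_mul_of_nonneg_left halog (div_nonneg (by norm_num) hRpos.le)
    have hWr2 : (2 * (‖q.1‖ - 1) / R) / ‖q.1‖ ≤ 2 / R := by
      rw [show (2 * (‖q.1‖ - 1) / R) / ‖q.1‖ = (2 / R) * ((‖q.1‖ - 1) / ‖q.1‖) by ring]
      have h1 : (‖q.1‖ - 1) / ‖q.1‖ ≤ 1 := by
        rw [div_le_one hr0]; linarith
      calc (2 / R) * ((‖q.1‖ - 1) / ‖q.1‖) ≤ (2 / R) * 1 :=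
            mul_le_mul_of_nonneg_left h1 (div_nonneg (by norm_num) hRpos.le)
        _ = 2 / R := mul_one _
    have hRile : R⁻¹ ≤ R₀⁻¹ := by
      apply inv_anti₀ hR₀ hRR
    have hKξ0 : 0 ≤ ((2 * (p / (p - 1))) * M₂ + (2 * (p / (p - 1))) * ((2 * (p / (p - 1))) - 1) * M₁ ^ 2) * (η (((‖q.1‖ - 1) ^ 2 + q.2) / R) ^ ((2 * (p / (p - 1))) - 2)) := mul_nonneg hK0 hξ0
    have hmMξ0 : 0 ≤ (2 * (p / (p - 1))) * M₁ * (η (((‖q.1‖ - 1) ^ 2 + q.2) / R) ^ ((2 * (p / (p - 1))) - 2)) := mul_nonneg hmM₁0 hξ0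
    have h2R0 : 0 ≤ 2 / R := div_nonneg (by norm_num) hRpos.le
    -- the Laplacian identity
    have hlapeq : F2fun η (2 * (p / (p - 1))) q.2 R ‖q.1‖ + F1fun η (2 * (p / (p - 1))) q.2 R ‖q.1‖ / ‖q.1‖
        = Real.log ‖q.1‖ * (ddG η (2 * (p / (p - 1))) (((‖q.1‖ - 1) ^ 2 + q.2) / R) * (2 * (‖q.1‖ - 1) / R) ^ 2) + Real.log ‖q.1‖ * (dG η (2 * (p / (p - 1))) (((‖q.1‖ - 1) ^ 2 + q.2) / R) * (2 / R)) + 2 * dG η (2 * (p / (p - 1))) (((‖q.1‖ - 1) ^ 2 + q.2) / R) * ((2 * (‖q.1‖ - 1) / R) / ‖q.1‖) + Real.log ‖q.1‖ * (dG η (2 * (p / (p - 1))) (((‖q.1‖ - 1) ^ 2 + q.2) / R) * ((2 * (‖q.1‖ - 1) / R) / ‖q.1‖)) := by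
      simp only [F2fun, F1fun]
      ring
    rw [hps, hlapeq]
    -- bounds for the six terms
    have hT1 : |Real.log ‖q.1‖ * (ddG η (2 * (p / (p - 1))) (((‖q.1‖ - 1) ^ 2 + q.2) / R) * (2 * (‖q.1‖ - 1) / R) ^ 2)| ≤ Real.log ‖q.1‖ * (((2 * (p / (p - 1))) * M₂ + (2 * (p / (p - 1))) * ((2 * (p / (p - 1))) - 1) * M₁ ^ 2) * (η (((‖q.1‖ - 1) ^ 2 + q.2) / R) ^ ((2 * (p / (p - 1))) - 2))) * (4 / R) := by
      simp only [abs_mul]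
      rw [abs_of_nonneg hL0, abs_of_nonneg (sq_nonneg ((2 * (‖q.1‖ - 1) / R)))]
      refine le_trans (mul_le_mul_of_nonneg_left
        (mul_le_mul hBabs hW2 (sq_nonneg _) hKξ0) hL0) (le_of_eq (by ring))
    have hT2 : |Real.log ‖q.1‖ * (dG η (2 * (p / (p - 1))) (((‖q.1‖ - 1) ^ 2 + q.2) / R) * (2 / R))| ≤ Real.log ‖q.1‖ * ((2 * (p / (p - 1))) * M₁ * (η (((‖q.1‖ - 1) ^ 2 + q.2) / R) ^ ((2 * (p / (p - 1))) - 2))) * (2 / R) := by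
      simp only [abs_mul]
      rw [abs_of_nonneg hL0, abs_of_nonneg h2R0]
      refine le_trans (mul_le_mul_of_nonneg_left
        (mul_le_mul_of_nonneg_right hAabs h2R0) hL0) (le_of_eq (by ring))
    have hT3 : |2 * dG η (2 * (p / (p - 1))) (((‖q.1‖ - 1) ^ 2 + q.2) / R) * ((2 * (‖q.1‖ - 1) / R) / ‖q.1‖)| ≤ 2 * ((2 * (p / (p - 1))) * M₁ * (η (((‖q.1‖ - 1) ^ 2 + q.2) / R) ^ ((2 * (p / (p - 1))) - 2))) * (2 * (Real.log ‖q.1‖) / R) := by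
      simp only [abs_mul]
      rw [abs_two, abs_of_nonneg hWr0]
      exact mul_le_mul (mul_le_mul_of_nonneg_left hAabs (by norm_num)) hWr hWr0
        (mul_nonneg (by norm_num) hmMξ0)
    have hT4 : |Real.log ‖q.1‖ * (dG η (2 * (p / (p - 1))) (((‖q.1‖ - 1) ^ 2 + q.2) / R) * ((2 * (‖q.1‖ - 1) / R) / ‖q.1‖))| ≤ Real.log ‖q.1‖ * ((2 * (p / (p - 1))) * M₁ * (η (((‖q.1‖ - 1) ^ 2 + q.2) / R) ^ ((2 * (p / (p - 1))) - 2))) * (2 / R) := by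
      simp only [abs_mul]
      rw [abs_of_nonneg hL0, abs_of_nonneg hWr0]
      refine le_trans (mul_le_mul_of_nonneg_left
        (mul_le_mul hAabs hWr2 hWr0 hmMξ0) hL0) (le_of_eq (by ring))
    have hT5 : |Real.log ‖q.1‖ * (ddG η (2 * (p / (p - 1))) (((‖q.1‖ - 1) ^ 2 + q.2) / R) * R⁻¹ * R⁻¹)|
        ≤ Real.log ‖q.1‖ * (((2 * (p / (p - 1))) * M₂ + (2 * (p / (p - 1))) * ((2 * (p / (p - 1))) - 1) * M₁ ^ 2) * (η (((‖q.1‖ - 1) ^ 2 + q.2) / R) ^ ((2 * (p / (p - 1))) - 2))) * (R₀⁻¹ * R⁻¹) := by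
      simp only [abs_mul]
      rw [abs_of_nonneg hL0]
      simp only [abs_of_nonneg hRi0]
      refine le_trans (mul_le_mul_of_nonneg_left
        (mul_le_mul (mul_le_mul hBabs hRile hRi0 hKξ0) le_rfl hRi0
          (mul_nonneg hKξ0 (inv_nonneg.2 hR₀.le))) hL0) (le_of_eq (by ring))
    have hT6 : |Real.log ‖q.1‖ * (dG η (2 * (p / (p - 1))) (((‖q.1‖ - 1) ^ 2 + q.2) / R) * R⁻¹)| ≤ Real.log ‖q.1‖ * ((2 * (p / (p - 1))) * M₁ * (η (((‖q.1‖ - 1) ^ 2 + q.2) / R) ^ ((2 * (p / (p - 1))) - 2))) * R⁻¹ := by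
      simp only [abs_mul]
      rw [abs_of_nonneg hL0, abs_of_nonneg hRi0]
      refine le_trans (mul_le_mul_of_nonneg_left
        (mul_le_mul_of_nonneg_right hAabs hRi0) hL0) (le_of_eq (by ring))
    have hfac : 0 ≤ R⁻¹ * ((Real.log ‖q.1‖) * (η (((‖q.1‖ - 1) ^ 2 + q.2) / R) ^ ((2 * (p / (p - 1))) - 2))) :=
      mul_nonneg hRi0 (mul_nonneg hL0 hξ0)
    refine le_trans (add_le_add_left (add_le_add_left (abs_add4 _ _ _ _) _) _) ?_
    refine le_trans (add_le_add (add_le_add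
      (add_le_add (add_le_add (add_le_add hT1 hT2) hT3) hT4) hT5) hT6) ?_
    have hring : Real.log ‖q.1‖ * (((2 * (p / (p - 1))) * M₂ + (2 * (p / (p - 1))) * ((2 * (p / (p - 1))) - 1) * M₁ ^ 2) * (η (((‖q.1‖ - 1) ^ 2 + q.2) / R) ^ ((2 * (p / (p - 1))) - 2))) * (4 / R) + Real.log ‖q.1‖ * ((2 * (p / (p - 1))) * M₁ * (η (((‖q.1‖ - 1) ^ 2 + q.2) / R) ^ ((2 * (p / (p - 1))) - 2))) * (2 / R) + 2 * ((2 * (p / (p - 1))) * M₁ * (η (((‖q.1‖ - 1) ^ 2 + q.2) / R) ^ ((2 * (p / (p - 1))) - 2))) * (2 * (Real.log ‖q.1‖) / R) + Real.log ‖q.1‖ * ((2 * (p / (p - 1))) * M₁ * (η (((‖q.1‖ - 1) ^ 2 + q.2) / R) ^ ((2 * (p / (p - 1))) - 2))) * (2 / R) + Real.log ‖q.1‖ * (((2 * (p / (p - 1))) * M₂ + (2 * (p / (p - 1))) * ((2 * (p / (p - 1))) - 1) * M₁ ^ 2) * (η (((‖q.1‖ - 1) ^ 2 + q.2) / R) ^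 ((2 * (p / (p - 1))) - 2))) * (R₀⁻¹ * R⁻¹) + Real.log ‖q.1‖ * ((2 * (p / (p - 1))) * M₁ * (η (((‖q.1‖ - 1) ^ 2 + q.2) / R) ^ ((2 * (p / (p - 1))) - 2))) * R⁻¹ + R⁻¹ * ((Real.log ‖q.1‖) * (η (((‖q.1‖ - 1) ^ 2 + q.2) / R) ^ ((2 * (p / (p - 1))) - 2)))
        = (9 * ((2 * (p / (p - 1))) * M₁) + 4 * ((2 * (p / (p - 1))) * M₂ + (2 * (p / (p - 1))) * ((2 * (p / (p - 1))) - 1) * M₁ ^ 2) + ((2 * (p / (p - 1))) * M₂ + (2 * (p / (p - 1))) * ((2 * (p / (p - 1))) - 1) * M₁ ^ 2) / R₀ + 1) * R⁻¹ * (Real.log ‖q.1‖) * (η (((‖q.1‖ - 1) ^ 2 + q.2) / R) ^ ((2 * (p / (p - 1))) - 2)) := by ring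
    linarith [hfac, hring]
end
end
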